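/- Let r be prime, e < r, and v_0, ..., v_{k-1} ∈ F_r^m such that Z = span{v_i - v_e : i ∈ I} for some I ⊆ {e, ..., k-1} with e ∈ I, and v_i - v_e ∉ Z for all erased indices i ∈ {0, ..., e-1}. Then there exists u ∈ F_r^m with u orthogonal to Z (i.e., u · z = 0 for all z ∈ Z) such that u · (v_i - v_e) ≠ 0 for every i ∈ {0, ..., e-1}. Consequently the hyperplane X_0 = {x : u · x = 0} contains Z and satisfies X_0 ⊕ span{v_i - v_e} = F_r^m for each erased i. -/

import Mathlib

open Finset

theorem aux_isCompl {K V : Type*} [Field K] [AddCommGroup V] [Module K V]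
    (f : V →ₗ[K] K) (x : V) (hx : f x ≠ 0) :
    IsCompl (LinearMap.ker f) (Submodule.span K {x}) := by
  constructor
  · rw [disjoint_iff]
    ext y
    simp only [Submodule.mem_inf, LinearMap.mem_ker, Submodule.mem_span_singleton,
      Submodule.mem_bot]
    constructor
    · rintro ⟨hy, c, rfl⟩
      simp only [map_smul, smul_eq_mul, mul_eq_zero] at hy
      rcases hy with h | h
      · simp [h]
      · exact absurd h hx
    · rintro rfl; exact ⟨map_zero f, 0, by simp⟩
  · rw [codisjoint_iff_le_sup]
    intro y _
    have : y = (y - (f y / f x) • x) + (f y / f x) • x := by ring_nf; abel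
    rw [this]
    refine Submodule.add_mem_sup ?_ (Submodule.smul_mem _ _ (Submodule.mem_span_singleton_self x))
    simp [LinearMap.mem_ker, div_mul_cancel₀ _ hx]

-- separation lemma: if w ∉ Z there is u orthogonal to Z with u·w ≠ 0
theorem aux_sep (r : ℕ) (hr : r.Prime) (m : ℕ) (Z : Submodule (ZMod r) (Fin m → ZMod r))
    (w : Fin m → ZMod r) (hw : w ∉ Z) :
    ∃ u : Fin m → ZMod r, (∀ z ∈ Z, ∑ t, u t * z t = 0) ∧ ∑ t, u t * w t ≠ 0 := by
  haveI := Fact.mk hr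
  obtain ⟨f, hfw, hfZ⟩ := Z.exists_dual_map_eq_bot_of_notMem hw inferInstance
  refine ⟨fun t => f (Pi.single t 1), ?_, ?_⟩
  · intro z hz
    have hz0 : f z = 0 := by
      rw [Submodule.eq_bot_iff] at hfZ
      exact hfZ _ (Submodule.mem_map_of_mem hz)
    calc ∑ t, f (Pi.single t 1) * z t = f z := by
          conv_rhs => rw [← Finset.univ_sum_single z]
          rw [map_sum]
          refine Finset.sum_congr rfl fun t _ => ?_
          have : (Pi.single t (z t) : Fin m → ZMod r) = z t • (Pi.single t 1 : Fin m → ZMod r) := by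
            ext j; simp only [Pi.single_apply, Pi.smul_apply, smul_eq_mul]; split <;> simp
          rw [this, map_smul, smul_eq_mul, mul_comm]
      _ = 0 := hz0
  · intro h
    apply hfw
    calc f w = ∑ t, f (Pi.single t 1) * w t := by
          conv_lhs => rw [← Finset.univ_sum_single w]
          rw [map_sum]
          refine Finset.sum_congr rfl fun t _ => ?_
          have : (Pi.single t (w t) : Fin m → ZMod r) = w t • (Pi.single t 1 : Fin m → ZMod r) := by
            ext j; simp only [Pi.single_apply, Pi.smul_apply, smul_eq_mul]; split <;> simp
          rw [this, map_smul, smul_eq_mul, mul_comm]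
      _ = 0 := h

theorem aux_avoid (r : ℕ) [NeZero r] (hr : r.Prime) (m e : ℕ) (he : e < r)
    (Z : Submodule (ZMod r) (Fin m → ZMod r)) (w : ℕ → (Fin m → ZMod r))
    (hw : ∀ i < e, w i ∉ Z) :
    ∃ u : Fin m → ZMod r, (∀ z ∈ Z, ∑ t, u t * z t = 0) ∧
      (∀ i < e, ∑ t, u t * w i t ≠ 0) := by
  classical
  haveI := Fact.mk hr
  set P : (Fin m → ZMod r) → Prop := fun u => ∀ z ∈ Z, ∑ t, u t * z t = 0 with hP
  set S : Finset (Fin m → ZMod r) := Finset.univ.filter P with hS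
  by_contra hcon
  push_neg at hcon
  -- every u in S has some i < e with dot u (w i) = 0
  have hcov : ∀ u ∈ S, ∃ i ∈ Finset.range e, ∑ t, u t * w i t = 0 := by
    intro u hu
    obtain ⟨i, hi, h0⟩ := hcon u (Finset.mem_filter.mp hu).2
    exact ⟨i, Finset.mem_range.mpr hi, h0⟩
  set Si : ℕ → Finset (Fin m → ZMod r) :=
    fun i => S.filter (fun u => ∑ t, u t * w i t = 0) with hSi
  have hsub : S ⊆ (Finset.range e).biUnion Si := by
    intro u hu
    obtain ⟨i, hi, h0⟩ := hcov u hu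
    exact Finset.mem_biUnion.mpr ⟨i, hi, Finset.mem_filter.mpr ⟨hu, h0⟩⟩
  -- each Si has card * r ≤ card S
  have hcard : ∀ i < e, (Si i).card * r ≤ S.card := by
    intro i hi
    obtain ⟨ui, hui, huiw⟩ := aux_sep r hr m Z (w i) (hw i hi)
    have : ((Si i) ×ˢ (Finset.univ : Finset (ZMod r))).card ≤ S.card := by
      apply Finset.card_le_card_of_injOn (fun p => p.1 + p.2 • ui)
      · rintro ⟨u, c⟩ hp
        simp only [Finset.mem_coe, Finset.mem_product] at hp
        have hu := (Finset.mem_filter.mp (Finset.mem_filter.mp hp.1).1).2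
        refine Finset.mem_filter.mpr ⟨Finset.mem_univ _, ?_⟩
        intro z hz
        have : ∑ t, (u t + c * ui t) * z t
            = (∑ t, u t * z t) + c * ∑ t, ui t * z t := by
          rw [Finset.mul_sum, ← Finset.sum_add_distrib]
          exact Finset.sum_congr rfl fun t _ => by ring
        simp [this, hu z hz, hui z hz]
      · rintro ⟨u, c⟩ hp ⟨u', c'⟩ hp' heq
        simp only [Finset.mem_coe, Finset.mem_product] at hp hp'
        have hu0 := (Finset.mem_filter.mp hp.1).2
        have hu'0 := (Finset.mem_filter.mp hp'.1).2
        have hdot : ∀ (a : Fin m → ZMod r) (c : ZMod r),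
            ∑ t, (a t + c * ui t) * w i t
            = (∑ t, a t * w i t) + c * ∑ t, ui t * w i t := by
          intro a c
          rw [Finset.mul_sum, ← Finset.sum_add_distrib]
          exact Finset.sum_congr rfl fun t _ => by ring
        have heq' : ∀ t, u t + c * ui t = u' t + c' * ui t := fun t => congrFun heq t
        have hsum : ∑ t, (u t + c * ui t) * w i t = ∑ t, (u' t + c' * ui t) * w i t := by
          exact Finset.sum_congr rfl fun t _ => by rw [heq' t]
        rw [hdot u c, hdot u' c', hu0, hu'0, zero_add, zero_add] at hsum
        have hcc : c = c' := mul_right_cancel₀ huiw hsum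
        subst hcc
        have : u = u' := by
          funext t
          have := heq' t
          simpa using this
        simp [this]
    simpa [Finset.card_product, Fintype.card_fin, ZMod.card] using this
  -- sum up
  have h1 : S.card ≤ ∑ i ∈ Finset.range e, (Si i).card :=
    le_trans (Finset.card_le_card hsub) (Finset.card_biUnion_le)
  have h2 : S.card * r ≤ e * S.card := by
    calc S.card * r ≤ (∑ i ∈ Finset.range e, (Si i).card) * r :=
          Nat.mul_le_mul_right r h1
      _ = ∑ i ∈ Finset.range e, (Si i).card * r := by rw [Finset.sum_mul]
      _ ≤ ∑ i ∈ Finset.range e, S.card :=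
          Finset.sum_le_sum fun i hi => hcard i (Finset.mem_range.mp hi)
      _ = e * S.card := by rw [Finset.sum_const, Finset.card_range, smul_eq_mul]
  have hpos : 0 < S.card := by
    apply Finset.card_pos.mpr
    exact ⟨0, Finset.mem_filter.mpr ⟨Finset.mem_univ _, fun z hz => by simp⟩⟩
  have : r ≤ e := by
    have := h2
    rw [mul_comm] at this
    exact Nat.le_of_mul_le_mul_right this hpos
  omega

theorem stmt_18 (r : ℕ) [NeZero r] (hr : r.Prime) (m k e : ℕ) (he : e < r)
    (v : ℕ → (Fin m → ZMod r)) (I : Set ℕ) (hI : I ⊆ Set.Icc e (k - 1)) (heI : e ∈ I) :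
    let Z : Submodule (ZMod r) (Fin m → ZMod r) :=
      Submodule.span (ZMod r) ((fun i => v i - v e) '' I)
    (∀ i < e, v i - v e ∉ Z) →
    ∃ u : Fin m → ZMod r,
      (∀ z ∈ Z, ∑ t, u t * z t = 0) ∧
      (∀ i < e, ∑ t, u t * (v i - v e) t ≠ 0) ∧
      (Z ≤ LinearMap.ker (∑ t, u t • (LinearMap.proj t :
          (Fin m → ZMod r) →ₗ[ZMod r] ZMod r))) ∧
      (∀ i < e,
        IsCompl
          (LinearMap.ker (∑ t, u t • (LinearMap.proj t :
            (Fin m → ZMod r) →ₗ[ZMod r] ZMod r)))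
          (Submodule.span (ZMod r) {v i - v e})) := by
  intro Z hZ
  haveI := Fact.mk hr
  obtain ⟨u, hu1, hu2⟩ := aux_avoid r hr m e he Z (fun i => v i - v e) hZ
  have hL : ∀ x : Fin m → ZMod r,
      (∑ t, u t • (LinearMap.proj t : (Fin m → ZMod r) →ₗ[ZMod r] ZMod r)) x
      = ∑ t, u t * x t := by
    intro x
    simp [LinearMap.sum_apply, LinearMap.smul_apply, LinearMap.proj_apply, smul_eq_mul]
  refine ⟨u, hu1, hu2, ?_, ?_⟩
  · intro z hz
    rw [LinearMap.mem_ker, hL]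
    exact hu1 z hz
  · intro i hi
    exact aux_isCompl _ _ (by rw [hL]; exact hu2 i hi)
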